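/- Let (S,T) be a finite directed graph with edge weights w : S × S → ℝ that has at least one cycle, and let μ* be the minimum mean weight over all cycles of (S,T). Then for every run ρ of (S,T), liminf_{n→∞} (1/n) Σ_{i=0}^{n-1} w(ρ(i), ρ(i+1)) ≥ μ*. -/

import Mathlib

open Filter

/-- A cycle `c₀, …, c_m` of the graph `(S, T)`. -/
def IsCycle {S : Type*} (T : S → S → Prop) (m : ℕ) (c : ℕ → S) : Prop :=
  (∀ i < m, T (c i) (c (i + 1))) ∧ T (c m) (c 0)

/-- The mean weight of the cycle `c₀, …, c_m`. -/
noncomputable def meanWeight {S : Type*} (w : S → S → ℝ) (m : ℕ) (c : ℕ → S) : ℝ :=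
  (∑ i ∈ Finset.range (m + 1), w (c i) (c ((i + 1) % (m + 1)))) / (m + 1)

/-- Excised cycle sum bound: if ρ is a run with ρ j = ρ k, j < k, then the
sum of weights over the segment [j, k) is at least (k-j)·μ*. -/
lemma cycle_seg {S : Type*} (T : S → S → Prop) (w : S → S → ℝ) (μstar : ℝ)
    (hlb : ∀ (m : ℕ) (c : ℕ → S), IsCycle T m c → μstar ≤ meanWeight w m c)
    (ρ : ℕ → S) (hρ : ∀ i, T (ρ i) (ρ (i + 1))) (j k : ℕ) (hjk : j < k)
    (heq : ρ j = ρ k) :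
    ((k - j : ℕ) : ℝ) * μstar ≤ ∑ i ∈ Finset.Ico j k, w (ρ i) (ρ (i + 1)) := by
  set m := k - j - 1 with hm
  have hm1 : m + 1 = k - j := by omega
  have hjm : j + m + 1 = k := by omega
  set c : ℕ → S := fun i => ρ (j + i) with hc
  have hcyc : IsCycle T m c := by
    constructor
    · intro i hi
      have : j + i + 1 = j + (i + 1) := by ring
      simpa [hc, ← this] using hρ (j + i)
    · have h1 : c m = ρ (j + m) := rfl
      have h2 : c 0 = ρ j := by simp [hc]
      rw [h1, h2, heq, ← hjm]
      exact hρ (j + m)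
  have hsum : ∑ i ∈ Finset.range (m + 1), w (c i) (c ((i + 1) % (m + 1)))
      = ∑ i ∈ Finset.Ico j k, w (ρ i) (ρ (i + 1)) := by
    rw [show Finset.Ico j k = Finset.Ico j (j + (m+1)) by congr 1; omega,
      Finset.sum_Ico_eq_sum_range]
    simp only [Nat.add_sub_cancel_left]
    apply Finset.sum_congr rfl
    intro i hi
    simp only [Finset.mem_range] at hi
    rcases Nat.lt_or_ge i m with h | h
    · have : (i + 1) % (m + 1) = i + 1 := Nat.mod_eq_of_lt (by omega)
      rw [this]
      have e1 : c i = ρ (j + i) := rfl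
      have e2 : c (i+1) = ρ (j + i + 1) := by simp [hc]; ring_nf
      rw [e1, e2]
    · have hi' : i = m := by omega
      subst hi'
      have : (m + 1) % (m + 1) = 0 := Nat.mod_self _
      rw [this]
      have e0 : c 0 = ρ (j + m + 1) := by
        show ρ (j + 0) = _
        rw [Nat.add_zero, heq, ← hjm]
      rw [e0]
  have := hlb m c hcyc
  rw [meanWeight, hsum] at this
  have hpos : (0:ℝ) < (m:ℝ) + 1 := by positivity
  rw [le_div_iff₀ hpos] at this
  calc ((k - j : ℕ) : ℝ) * μstar = μstar * ((m:ℝ) + 1) := by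
        rw [← hm1]; push_cast; ring
    _ ≤ _ := this

lemma key {S : Type*} [Fintype S] (T : S → S → Prop) (w : S → S → ℝ) (μstar K : ℝ)
    (hK0 : 0 ≤ K) (hK : ∀ s t : S, μstar - K ≤ w s t)
    (hlb : ∀ (m : ℕ) (c : ℕ → S), IsCycle T m c → μstar ≤ meanWeight w m c) :
    ∀ (n : ℕ) (ρ : ℕ → S), (∀ i, T (ρ i) (ρ (i + 1))) →
      (n : ℝ) * μstar - (Fintype.card S : ℝ) * K ≤ ∑ i ∈ Finset.range n, w (ρ i) (ρ (i + 1)) := by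
  intro n
  induction n using Nat.strong_induction_on with
  | _ n IH =>
    intro ρ hρ
    by_cases hn : n ≤ Fintype.card S
    · have h1 : (n : ℝ) * (μstar - K) ≤ ∑ i ∈ Finset.range n, w (ρ i) (ρ (i + 1)) := by
        calc (n:ℝ) * (μstar - K) = ∑ _i ∈ Finset.range n, (μstar - K) := by
              simp [mul_comm]; ring
          _ ≤ _ := Finset.sum_le_sum fun i _ => hK _ _
      have hcard : (n : ℝ) ≤ (Fintype.card S : ℝ) := by exact_mod_cast hn
      nlinarith
    · push_neg at hn
      -- pigeonhole on the first card S + 1 states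
      obtain ⟨a, ha, b, hb, hab, hfab⟩ :=
        Finset.exists_ne_map_eq_of_card_lt_of_maps_to
          (s := Finset.range (Fintype.card S + 1)) (t := Finset.univ)
          (by simp) (fun i _ => Finset.mem_univ (ρ i))
      simp only [Finset.mem_range] at ha hb
      wlog hab' : a < b generalizing a b
      · exact this b a hab.symm hfab.symm hb ha (by omega)
      set j := a; set k := b
      have hkn : k < n := by omega
      set d := k - j with hd
      have hd0 : 0 < d := by omega
      have hjd : j + d = k := by omega
      -- the shortened run
      set ρ' : ℕ → S := fun i => if i < j then ρ i else ρ (i + d) with hρ'def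
      have hρ'run : ∀ i, T (ρ' i) (ρ' (i + 1)) := by
        intro i
        rcases lt_trichotomy (i + 1) j with h | h | h
        · simp only [hρ'def, if_pos (by omega : i < j), if_pos h]; exact hρ i
        · have hij : i < j := by omega
          simp only [hρ'def, if_pos hij, if_neg (by omega : ¬ i + 1 < j)]
          have heq2 : ρ (i + 1 + d) = ρ (i + 1) := by
            rw [show i + 1 + d = k by omega, ← hfab, h]
          rw [heq2]; exact hρ i
        · simp only [hρ'def, if_neg (by omega : ¬ i < j), if_neg (by omega : ¬ i + 1 < j)]
          have : i + 1 + d = i + d + 1 := by ring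
          rw [this]; exact hρ (i + d)
      -- sum identity: prefix of ρ' of length n - d
      have hsum : ∑ i ∈ Finset.range (n - d), w (ρ' i) (ρ' (i + 1))
          = ∑ i ∈ Finset.Ico 0 j, w (ρ i) (ρ (i + 1))
            + ∑ i ∈ Finset.Ico k n, w (ρ i) (ρ (i + 1)) := by
        have hjnd : j ≤ n - d := by omega
        rw [Finset.range_eq_Ico, ← Finset.sum_Ico_consecutive _ (Nat.zero_le j) hjnd]
        congr 1
        · apply Finset.sum_congr rfl
          intro i hi
          simp only [Finset.mem_Ico] at hi
          rcases lt_trichotomy (i + 1) j with h | h | h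
          · simp [hρ'def, hi.2, h]
          · simp only [hρ'def, if_pos hi.2, if_neg (by omega : ¬ i + 1 < j)]
            rw [show i + 1 + d = k by omega, ← hfab, h]
          · omega
        · rw [show Finset.Ico k n = Finset.Ico (j + d) (n - d + d) by congr 1 <;> omega]
          rw [← Finset.sum_Ico_add]
          apply Finset.sum_congr rfl
          intro i hi
          simp only [Finset.mem_Ico] at hi
          simp only [hρ'def, if_neg (by omega : ¬ i < j), if_neg (by omega : ¬ i + 1 < j)]
          rw [Nat.add_comm d i, show i + 1 + d = i + d + 1 by ring]
      have hIH := IH (n - d) (by omega) ρ' hρ'run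
      have hcyc := cycle_seg T w μstar hlb ρ hρ j k hab' hfab
      have hsplit : ∑ i ∈ Finset.range n, w (ρ i) (ρ (i + 1))
          = ∑ i ∈ Finset.Ico 0 j, w (ρ i) (ρ (i + 1))
            + ∑ i ∈ Finset.Ico j k, w (ρ i) (ρ (i + 1))
            + ∑ i ∈ Finset.Ico k n, w (ρ i) (ρ (i + 1)) := by
        rw [Finset.range_eq_Ico,
          ← Finset.sum_Ico_consecutive _ (Nat.zero_le k) (le_of_lt hkn),
          ← Finset.sum_Ico_consecutive _ (Nat.zero_le j) (le_of_lt hab')]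
      have hnd : ((n - d : ℕ) : ℝ) = (n : ℝ) - (d : ℕ) := by
        push_cast [Nat.cast_sub (by omega : d ≤ n)]; ring
      rw [hsplit]
      rw [hsum] at hIH
      have : ((k - j : ℕ) : ℝ) = (d : ℝ) := by rw [hd]
      rw [this] at hcyc
      rw [hnd] at hIH
      linarith

/-- If `μ*` is the minimum mean weight over all cycles, then the
liminf of the average edge-weight along any run is at least `μ*`. -/
theorem stmt_3 {S : Type*} [Fintype S] [Nonempty S] (T : S → S → Prop)
    (w : S → S → ℝ) (μstar : ℝ)
    (hmem : ∃ (m : ℕ) (c : ℕ → S), IsCycle T m c ∧ meanWeight w m c = μstar)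
    (hlb : ∀ (m : ℕ) (c : ℕ → S), IsCycle T m c → μstar ≤ meanWeight w m c)
    (ρ : ℕ → S) (hρ : ∀ i, T (ρ i) (ρ (i + 1))) :
    μstar ≤ liminf (fun n : ℕ =>
      (∑ i ∈ Finset.range n, w (ρ i) (ρ (i + 1))) / n) atTop := by
  obtain ⟨K, hKb⟩ := Finite.exists_le (fun p : S × S => |w p.1 p.2 - μstar|)
  have hK : ∀ s t : S, |w s t - μstar| ≤ K := fun s t => hKb (s, t)
  have hK0 : 0 ≤ K := by
    obtain ⟨s⟩ := ‹Nonempty S›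
    exact le_trans (abs_nonneg _) (hK s s)
  have hKlow : ∀ s t : S, μstar - K ≤ w s t := fun s t => by
    have := (abs_le.mp (hK s t)).1; linarith
  have hKhigh : ∀ s t : S, w s t ≤ μstar + K := fun s t => by
    have := (abs_le.mp (hK s t)).2; linarith
  set C : ℝ := (Fintype.card S : ℝ) * K with hC
  have hC0 : 0 ≤ C := by positivity
  set u : ℕ → ℝ := fun n => (∑ i ∈ Finset.range n, w (ρ i) (ρ (i + 1))) / n with hu
  set v : ℕ → ℝ := fun n => μstar - C / n with hv
  have hkey := key T w μstar K hK0 hKlow hlb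
  have hvu : ∀ᶠ n in atTop, v n ≤ u n := by
    filter_upwards [Filter.eventually_ge_atTop 1] with n hn
    have hnpos : (0:ℝ) < n := by exact_mod_cast hn
    have h := hkey n ρ hρ
    show μstar - C / (n:ℝ) ≤ (∑ i ∈ Finset.range n, w (ρ i) (ρ (i + 1))) / n
    rw [show μstar - C / (n:ℝ) = ((n:ℝ) * μstar - C) / n by field_simp]
    gcongr
  have hvlim : Filter.Tendsto v atTop (nhds μstar) := by
    have h1 : Filter.Tendsto (fun n : ℕ => C / n) atTop (nhds 0) :=
      tendsto_const_div_atTop_nhds_zero_nat C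
    have := (tendsto_const_nhds (x := μstar) (f := atTop (α := ℕ))).sub h1
    simpa using this
  have hbv : Filter.IsBoundedUnder (· ≥ ·) atTop v := hvlim.isBoundedUnder_ge
  have hubu : Filter.IsBoundedUnder (· ≤ ·) atTop u := by
    refine Filter.isBoundedUnder_of ⟨max 0 (μstar + K), fun n => ?_⟩
    rcases Nat.eq_zero_or_pos n with h0 | h0
    · simp [hu, h0]
    · have hnpos : (0:ℝ) < n := by exact_mod_cast h0
      have hs : ∑ i ∈ Finset.range n, w (ρ i) (ρ (i + 1)) ≤ (n:ℝ) * (μstar + K) := by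
        calc _ ≤ ∑ _i ∈ Finset.range n, (μstar + K) :=
              Finset.sum_le_sum fun i _ => hKhigh _ _
          _ = (n:ℝ) * (μstar + K) := by
              rw [Finset.sum_const, Finset.card_range, nsmul_eq_mul]
      have : u n ≤ μstar + K := by
        rw [hu, div_le_iff₀ hnpos]; linarith [hs]
      exact this.trans (le_max_right _ _)
  have hcu : Filter.IsCoboundedUnder (· ≥ ·) atTop u := hubu.isCoboundedUnder_ge
  calc μstar = liminf v atTop := (hvlim.liminf_eq).symm
    _ ≤ liminf u atTop := Filter.liminf_le_liminf hvu hbv hcu
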